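/- Under algorithm PEF_3+ (a robot reverses its direction exactly when it has moved in the previous round and is currently co-located with another robot), if two robots form a tower at time t (i.e., occupy the same node at time t while not both occupying the same node at time t−1 with the same directions), then immediately after the Compute phase of time t the two robots consider opposite global directions, and they keep these opposite directions as long as they remain co-located. -/

import Mathlib

/-- Under PEF_3+ (a robot reverses direction exactly when it moved during
the previous round and is co-located with another robot), if exactly two robots form a
tower at time `t+1` (same node at `t+1`, but not both on the same node with the same
direction at time `t`), then right after the Compute phase of time `t+1` their directions
are opposite, and they stay opposite as long as the two robots remain co-located. -/
theorem stmt5 {n : ℕ} {ι : Type} [Fintype ι]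
    (E : ℕ → ZMod n → Prop)
    (pos : ℕ → ι → ZMod n) (dir : ℕ → ι → ℤ) (moved : ℕ → ι → Prop)
    (hdir : ∀ t r, dir t r = 1 ∨ dir t r = -1)
    (hmove : ∀ t r,
      (E t (if dir t r = 1 then pos t r else pos t r - 1) →
        pos (t + 1) r = pos t r + ((dir t r : ℤ) : ZMod n) ∧ moved t r) ∧
      (¬ E t (if dir t r = 1 then pos t r else pos t r - 1) →
        pos (t + 1) r = pos t r ∧ ¬ moved t r))
    (hcompute : ∀ t r,
      ((moved t r ∧ ∃ r', r' ≠ r ∧ pos (t + 1) r' = pos (t + 1) r) →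
        dir (t + 1) r = -dir t r) ∧
      (¬ (moved t r ∧ ∃ r', r' ≠ r ∧ pos (t + 1) r' = pos (t + 1) r) →
        dir (t + 1) r = dir t r))
    (t : ℕ) (r₁ r₂ : ι) (hne : r₁ ≠ r₂)
    (htower : pos (t + 1) r₁ = pos (t + 1) r₂)
    (honly : ∀ r : ι, pos (t + 1) r = pos (t + 1) r₁ → r = r₁ ∨ r = r₂)
    (hnew : ¬ (pos t r₁ = pos t r₂ ∧ dir t r₁ = dir t r₂)) :
    dir (t + 1) r₁ = -dir (t + 1) r₂ ∧
    ∀ t' ≥ t + 1, (∀ s, t + 1 ≤ s → s ≤ t' → pos s r₁ = pos s r₂) →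
      dir t' r₁ = -dir t' r₂ := by
  classical
  -- moved is equivalent to the edge being present
  have hmoveE : ∀ s r, moved s r ↔ E s (if dir s r = 1 then pos s r else pos s r - 1) := by
    intro s r
    constructor
    · intro hm
      by_contra hE
      exact ((hmove s r).2 hE).2 hm
    · intro hE
      exact ((hmove s r).1 hE).2
  have hposM : ∀ s r, moved s r → pos (s + 1) r = pos s r + ((dir s r : ℤ) : ZMod n) :=
    fun s r hm => ((hmove s r).1 ((hmoveE s r).1 hm)).1
  have hposN : ∀ s r, ¬ moved s r → pos (s + 1) r = pos s r := by
    intro s r hm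
    by_cases hE : E s (if dir s r = 1 then pos s r else pos s r - 1)
    · exact absurd ((hmove s r).1 hE).2 hm
    · exact ((hmove s r).2 hE).1
  -- direction update when co-located at s+1
  have hflip : ∀ s, pos (s + 1) r₁ = pos (s + 1) r₂ → ∀ i, (i = r₁ ∨ i = r₂) →
      dir (s + 1) i = if moved s i then -dir s i else dir s i := by
    intro s hco i hi
    have hex : ∃ r', r' ≠ i ∧ pos (s + 1) r' = pos (s + 1) i := by
      rcases hi with rfl | rfl
      · exact ⟨r₂, Ne.symm hne, hco.symm⟩
      · exact ⟨r₁, hne, hco⟩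
    by_cases hm : moved s i
    · simpa [hm] using (hcompute s i).1 ⟨hm, hex⟩
    · simpa [hm] using (hcompute s i).2 (by tauto)
  -- key claim: one-step oppositeness
  have claim : ∀ s, pos (s + 1) r₁ = pos (s + 1) r₂ →
      ¬ (pos s r₁ = pos s r₂ ∧ dir s r₁ = dir s r₂) →
      dir (s + 1) r₁ = -dir (s + 1) r₂ := by
    intro s hco hnotsame
    have h1 := hflip s hco r₁ (Or.inl rfl)
    have h2 := hflip s hco r₂ (Or.inr rfl)
    by_cases hm1 : moved s r₁ <;> by_cases hm2 : moved s r₂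
    · -- both moved
      rw [if_pos hm1] at h1; rw [if_pos hm2] at h2
      have hp1 := hposM s r₁ hm1
      have hp2 := hposM s r₂ hm2
      have hd12 : dir s r₁ ≠ dir s r₂ := by
        intro heq
        apply hnotsame
        refine ⟨?_, heq⟩
        rw [hp1, hp2, heq] at hco
        exact add_right_cancel hco
      rw [h1, h2]
      rcases hdir s r₁ with hd1 | hd1 <;> rcases hdir s r₂ with hd2 | hd2 <;>
        rw [hd1, hd2] at hd12 ⊢ <;> omega
    · -- r₁ moved, r₂ did not
      rw [if_pos hm1] at h1; rw [if_neg hm2] at h2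
      have hp1 := hposM s r₁ hm1
      have hp2 := hposN s r₂ hm2
      have hd12 : dir s r₁ = dir s r₂ := by
        rcases hdir s r₁ with hd1 | hd1 <;> rcases hdir s r₂ with hd2 | hd2 <;>
          try rw [hd1, hd2]
        · exfalso
          apply hm2
          rw [hmoveE]
          have hnode : pos s r₂ - 1 = pos s r₁ := by
            rw [hp1, hp2, hd1] at hco
            rw [← hco]; push_cast; ring
          rw [if_neg (by rw [hd2]; norm_num), hnode]
          have := (hmoveE s r₁).1 hm1
          rwa [if_pos hd1] at this
        · exfalso
          apply hm2
          rw [hmoveE]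
          have hnode : pos s r₂ = pos s r₁ - 1 := by
            rw [hp1, hp2, hd1] at hco
            rw [← hco]; push_cast; ring
          rw [if_pos hd2, hnode]
          have := (hmoveE s r₁).1 hm1
          rwa [if_neg (by rw [hd1]; norm_num)] at this
      rw [h1, h2, hd12]
    · -- r₂ moved, r₁ did not
      rw [if_neg hm1] at h1; rw [if_pos hm2] at h2
      have hp1 := hposN s r₁ hm1
      have hp2 := hposM s r₂ hm2
      have hd12 : dir s r₁ = dir s r₂ := by
        rcases hdir s r₁ with hd1 | hd1 <;> rcases hdir s r₂ with hd2 | hd2 <;>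
          try rw [hd1, hd2]
        · exfalso
          apply hm1
          rw [hmoveE]
          have hnode : pos s r₁ = pos s r₂ - 1 := by
            rw [hp1, hp2, hd2] at hco
            rw [hco]; push_cast; ring
          rw [if_pos hd1, hnode]
          have := (hmoveE s r₂).1 hm2
          rwa [if_neg (by rw [hd2]; norm_num)] at this
        · exfalso
          apply hm1
          rw [hmoveE]
          have hnode : pos s r₁ - 1 = pos s r₂ := by
            rw [hp1, hp2, hd2] at hco
            rw [hco]; push_cast; ring
          rw [if_neg (by rw [hd1]; norm_num), hnode]
          have := (hmoveE s r₂).1 hm2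
          rwa [if_pos hd2] at this
      rw [h1, h2, hd12]
      ring
    · -- neither moved
      rw [if_neg hm1] at h1; rw [if_neg hm2] at h2
      have hp1 := hposN s r₁ hm1
      have hp2 := hposN s r₂ hm2
      have hpos : pos s r₁ = pos s r₂ := by rw [← hp1, ← hp2, hco]
      have hd12 : dir s r₁ ≠ dir s r₂ := fun heq => hnotsame ⟨hpos, heq⟩
      rw [h1, h2]
      rcases hdir s r₁ with hd1 | hd1 <;> rcases hdir s r₂ with hd2 | hd2 <;>
        rw [hd1, hd2] at hd12 ⊢ <;> omega
  have base := claim t htower hnew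
  refine ⟨base, ?_⟩
  intro t' ht' hco
  induction t', ht' using Nat.le_induction with
  | base => exact base
  | succ s hs ih =>
    have hcos : ∀ u, t + 1 ≤ u → u ≤ s → pos u r₁ = pos u r₂ :=
      fun u h1 h2 => hco u h1 (h2.trans (Nat.le_succ s))
    have hopp := ih hcos
    apply claim s (hco (s + 1) (hs.trans (Nat.le_succ s)) le_rfl)
    rintro ⟨-, hd⟩
    rcases hdir s r₂ with h | h <;> rw [hd, h] at hopp <;> norm_num at hopp
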